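/- Uniqueness of γ-normal forms: if M ↠_γ N₁ and M ↠_γ N₂ where N₁ and N₂ are both in γ-normal form, then N₁ ≡ N₂ (they are identical up to the congruence generated by (ClnOrd) and (ClnNest)). Hence every λ^p-term M has a unique γ-normal form, denoted γ(M). -/

import Mathlib

/-- λ^p-terms: M ::= x | M₁ M₂ | λx.M | (M₁, M₂) over a countably infinite
set of variables. -/
inductive PTerm : Type
  | var : ℕ → PTerm
  | app : PTerm → PTerm → PTerm
  | lam : ℕ → PTerm → PTerm
  | coll : PTerm → PTerm → PTerm

/-- The congruence on λ^p-terms generated by (ClnOrd) M,N ≡ N,M and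
(ClnNest) (M,N),P ≡ M,(N,P): the smallest equivalence relation compatible
with all term constructors containing the two axioms. -/
inductive Cong : PTerm → PTerm → Prop
  | refl (M : PTerm) : Cong M M
  | symm {M N : PTerm} : Cong M N → Cong N M
  | trans {M N P : PTerm} : Cong M N → Cong N P → Cong M P
  | app {M M' N N' : PTerm} : Cong M M' → Cong N N' → Cong (.app M N) (.app M' N')
  | lam (x : ℕ) {M M' : PTerm} : Cong M M' → Cong (.lam x M) (.lam x M')
  | coll {M M' N N' : PTerm} : Cong M M' → Cong N N' → Cong (.coll M N) (.coll M' N')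
  | ord (M N : PTerm) : Cong (.coll M N) (.coll N M)
  | nest (M N P : PTerm) : Cong (.coll (.coll M N) P) (.coll M (.coll N P))

/-- `collOf M [N₁,…,Nₖ]` is the right-associated collection `(M, N₁, …, Nₖ)`. -/
def collOf : PTerm → List PTerm → PTerm
  | M, [] => M
  | M, N :: L => .coll M (collOf N L)

/-- A term is a collection if its outermost constructor is the comma. -/
def IsColl : PTerm → Prop
  | .coll _ _ => True
  | _ => False

/-- The γ-relation of the λ^p-calculus: it relates each application P Q, where
P is congruent to a collection (M₀,…,M_m) and Q to a collection (N₀,…,N_n)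
with at least one of them a proper (more-than-one-element) collection, to the
collection of all applications M_i N_j. -/
inductive Gamma : PTerm → PTerm → Prop
  | mk (P Q M N : PTerm) (Ms Ns : List PTerm)
      (hP : Cong P (collOf M Ms)) (hQ : Cong Q (collOf N Ns))
      (hn : Ms ≠ [] ∨ Ns ≠ []) :
      Gamma (.app P Q)
        (collOf (.app M N)
          (Ns.map (.app M) ++ Ms.flatMap fun Mi => (N :: Ns).map (.app Mi)))

/-- One-step γ-reduction: the compatible closure (closure under all term
constructors) of the γ-relation. -/
inductive StepG : PTerm → PTerm → Prop
  | gamma {M N : PTerm} : Gamma M N → StepG M N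
  | appL {M M' N : PTerm} : StepG M M' → StepG (.app M N) (.app M' N)
  | appR {M N N' : PTerm} : StepG N N' → StepG (.app M N) (.app M N')
  | lam (x : ℕ) {M M' : PTerm} : StepG M M' → StepG (.lam x M) (.lam x M')
  | collL {M M' N : PTerm} : StepG M M' → StepG (.coll M N) (.coll M' N)
  | collR {M N N' : PTerm} : StepG N N' → StepG (.coll M N) (.coll M N')

/-- γ-reduction ↠_γ : the reflexive-transitive closure of one-step
γ-reduction, on terms considered up to the congruence generated by
(ClnOrd) and (ClnNest). -/
def RedG : PTerm → PTerm → Prop :=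
  Relation.ReflTransGen (fun M N => StepG M N ∨ Cong M N)

/-- A term is in γ-normal form if it contains no γ-redex: no subterm is an
application P Q in which P or Q is a collection. -/
def NoGammaRedex : PTerm → Prop
  | .var _ => True
  | .lam _ M => NoGammaRedex M
  | .app P Q => ¬ IsColl P ∧ ¬ IsColl Q ∧ NoGammaRedex P ∧ NoGammaRedex Q
  | .coll P Q => NoGammaRedex P ∧ NoGammaRedex Q

namespace GammaNF

open PTerm

/-- The list of non-collection leaves of a term. -/
def leaves : PTerm → List PTerm
  | .coll M N => leaves M ++ leaves N
  | M => [M]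

@[simp] lemma leaves_var (x : ℕ) : leaves (.var x) = [.var x] := rfl
@[simp] lemma leaves_lam (x : ℕ) (M : PTerm) : leaves (.lam x M) = [.lam x M] := rfl
@[simp] lemma leaves_app (M N : PTerm) : leaves (.app M N) = [.app M N] := rfl
@[simp] lemma leaves_coll (M N : PTerm) :
    leaves (.coll M N) = leaves M ++ leaves N := rfl

lemma leaves_ne_nil : ∀ M : PTerm, leaves M ≠ []
  | .var _ => by simp
  | .lam _ _ => by simp
  | .app _ _ => by simp
  | .coll M N => by simp [leaves_ne_nil M]

lemma not_isColl_of_mem_leaves : ∀ (M : PTerm), ∀ c ∈ leaves M, ¬ IsColl c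
  | .var x, c, hc => by simp at hc; subst hc; simp [IsColl]
  | .lam x M, c, hc => by simp at hc; subst hc; simp [IsColl]
  | .app M N, c, hc => by simp at hc; subst hc; simp [IsColl]
  | .coll M N, c, hc => by
      rcases List.mem_append.1 hc with h | h
      · exact not_isColl_of_mem_leaves M c h
      · exact not_isColl_of_mem_leaves N c h

lemma leaves_eq_single_of_not_isColl {M : PTerm} (h : ¬ IsColl M) :
    leaves M = [M] := by
  cases M <;> simp_all [IsColl]

lemma eq_of_leaves_eq_single : ∀ {M a : PTerm}, leaves M = [a] → M = a := by
  intro M a h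
  cases M with
  | coll P Q =>
      exfalso
      rcases List.exists_cons_of_ne_nil (leaves_ne_nil P) with ⟨p, ps, hp⟩
      rcases List.exists_cons_of_ne_nil (leaves_ne_nil Q) with ⟨q, qs, hq⟩
      simp [hp, hq] at h
  | var x => simpa using h
  | lam x M => simpa using h
  | app P Q => simpa using h

/-- `mkC [M₁,…,Mₖ]` is the right-associated collection. -/
def mkC : List PTerm → PTerm
  | [] => .var 0
  | a :: l => collOf a l

@[simp] lemma mkC_single (a : PTerm) : mkC [a] = a := rfl

lemma mkC_cons (a : PTerm) {l : List PTerm} (h : l ≠ []) :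
    mkC (a :: l) = .coll a (mkC l) := by
  cases l with
  | nil => exact absurd rfl h
  | cons b l' => rfl

def pairsL (A B : List PTerm) : List PTerm := A.flatMap fun a => B.map (.app a)

lemma pairsL_ne_nil {A B : List PTerm} (hA : A ≠ []) (hB : B ≠ []) :
    pairsL A B ≠ [] := by
  rcases List.exists_cons_of_ne_nil hA with ⟨a, A', rfl⟩
  rcases List.exists_cons_of_ne_nil hB with ⟨b, B', rfl⟩
  simp [pairsL]

lemma mem_pairsL {A B : List PTerm} {c : PTerm} (h : c ∈ pairsL A B) :
    ∃ a ∈ A, ∃ b ∈ B, c = .app a b := by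
  simp only [pairsL, List.mem_flatMap, List.mem_map] at h
  rcases h with ⟨a, ha, b, hb, rfl⟩
  exact ⟨a, ha, b, hb, rfl⟩

end GammaNF
namespace GammaNF
open PTerm

deriving instance DecidableEq for PTerm

instance : IsRefl PTerm Cong := ⟨Cong.refl⟩
instance : Std.Symm Cong := ⟨fun _ _ => Cong.symm⟩
instance : IsTrans PTerm Cong := ⟨fun _ _ _ => Cong.trans⟩

lemma cong_mkC_append : ∀ {A : List PTerm} (B : List PTerm), A ≠ [] → B ≠ [] →
    Cong (mkC (A ++ B)) (.coll (mkC A) (mkC B))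
  | [], _, hA, _ => absurd rfl hA
  | [a], B, _, hB => by
      rw [List.singleton_append, mkC_cons a hB, mkC_single]
      exact Cong.refl _
  | a :: a' :: A', B, _, hB => by
      have h1 : (a' :: A') ++ B ≠ [] := by simp
      rw [List.cons_append, mkC_cons a h1, mkC_cons a (by simp : a' :: A' ≠ [])]
      exact (Cong.coll (Cong.refl a) (cong_mkC_append B (by simp) hB)).trans
        (Cong.nest a (mkC (a' :: A')) (mkC B)).symm |>.trans
        (Cong.refl _)

lemma cong_mkC_leaves : ∀ M : PTerm, Cong M (mkC (leaves M))
  | .var x => Cong.refl _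
  | .lam x M => Cong.refl _
  | .app M N => Cong.refl _
  | .coll M N => by
      refine (Cong.coll (cong_mkC_leaves M) (cong_mkC_leaves N)).trans ?_
      exact (cong_mkC_append (leaves N) (leaves_ne_nil M) (leaves_ne_nil N)).symm

lemma cong_mkC_forall₂ : ∀ {A B : List PTerm}, List.Forall₂ Cong A B →
    Cong (mkC A) (mkC B) := by
  intro A B h
  induction h with
  | nil => exact Cong.refl _
  | @cons a b l l' hab hll ih =>
      cases l with
      | nil => cases hll; simpa using hab
      | cons c cs =>
          have hl' : l' ≠ [] := by
            cases hll; simp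
          rw [mkC_cons a (by simp), mkC_cons b hl']
          exact Cong.coll hab ih

lemma cong_mkC_perm : ∀ {A B : List PTerm}, A.Perm B → Cong (mkC A) (mkC B) := by
  intro A B h
  induction h with
  | nil => exact Cong.refl _
  | @cons x l l' p ih =>
      cases l with
      | nil => cases p.symm.eq_nil; exact Cong.refl _
      | cons c cs =>
          have hl' : l' ≠ [] := by
            intro h0; subst h0; exact absurd p.eq_nil (by simp)
          rw [mkC_cons x (by simp), mkC_cons x hl']
          exact Cong.coll (Cong.refl x) ih
  | @swap x y l =>
      cases l with
      | nil => exact Cong.ord y x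
      | cons c cs =>
          show Cong (.coll y (.coll x (mkC (c :: cs)))) (.coll x (.coll y (mkC (c :: cs))))
          exact (Cong.nest y x (mkC (c :: cs))).symm.trans
            ((Cong.coll (Cong.ord y x) (Cong.refl _)).trans
              (Cong.nest x y (mkC (c :: cs))))
  | @trans l₁ l₂ l₃ _ _ ih1 ih2 => exact ih1.trans ih2

lemma rel_decomp : ∀ {A : List PTerm} {B : List PTerm},
    Multiset.Rel Cong (↑A) (↑B) → ∃ C, List.Forall₂ Cong A C ∧ C.Perm B := by
  intro A
  induction A with
  | nil =>
      intro B h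
      rw [Multiset.coe_nil, Multiset.rel_zero_left] at h
      have : B = [] := by simpa using h
      exact ⟨[], List.Forall₂.nil, by simp [this]⟩
  | cons a A' ih =>
      intro B h
      rw [show ((a :: A' : List PTerm) : Multiset PTerm) = a ::ₘ (↑A') by simp] at h
      rcases Multiset.rel_cons_left.1 h with ⟨b, bs, hab, hrest, hB⟩
      have hbB : b ∈ B := by
        have : b ∈ (↑B : Multiset PTerm) := by rw [hB]; exact Multiset.mem_cons_self _ _
        exact_mod_cast this
      have herase : ((B.erase b : List PTerm) : Multiset PTerm) = bs := by
        have := Multiset.cons_erase (show b ∈ (↑B : Multiset PTerm) by exact_mod_cast hbB)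
        rw [hB] at this
        have h2 : (↑(B.erase b) : Multiset PTerm) = (↑B : Multiset PTerm).erase b := by
          simp [Multiset.coe_erase]
        rw [h2, hB]
        simp
      rcases ih (by rw [herase]; exact hrest) with ⟨C', hf, hp⟩
      refine ⟨b :: C', List.Forall₂.cons hab hf, ?_⟩
      exact (hp.cons b).trans (List.perm_cons_erase hbB).symm

lemma cong_mkC_of_rel {A B : List PTerm}
    (h : Multiset.Rel Cong (↑A) (↑B)) : Cong (mkC A) (mkC B) := by
  rcases rel_decomp h with ⟨C, hf, hp⟩
  exact (cong_mkC_forall₂ hf).trans (cong_mkC_perm hp)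

lemma cong_of_rel_leaves {M N : PTerm}
    (h : Multiset.Rel Cong (↑(leaves M)) (↑(leaves N))) : Cong M N :=
  (cong_mkC_leaves M).trans ((cong_mkC_of_rel h).trans (cong_mkC_leaves N).symm)

lemma rel_single {a b : PTerm} (h : Cong a b) :
    Multiset.Rel Cong (↑([a] : List PTerm)) (↑([b] : List PTerm)) := by
  simpa using Multiset.Rel.cons h Multiset.Rel.zero

lemma leaves_rel : ∀ {M N : PTerm}, Cong M N →
    Multiset.Rel Cong (↑(leaves M)) (↑(leaves N)) := by
  intro M N h
  induction h with
  | refl M => exact Multiset.rel_refl_of_refl_on fun x _ => Cong.refl x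
  | symm _ ih => exact (Multiset.rel_flip.2 ih).mono fun _ _ _ _ h => h.symm
  | trans _ _ ih1 ih2 => exact ih1.trans Cong ih2
  | app h1 h2 ih1 ih2 => exact rel_single (Cong.app h1 h2)
  | lam x h ih => exact rel_single (Cong.lam x h)
  | coll h1 h2 ih1 ih2 => simpa using Multiset.Rel.add ih1 ih2
  | ord M N =>
      simp only [leaves_coll]
      rw [← Multiset.coe_add, ← Multiset.coe_add, add_comm]
      exact Multiset.rel_refl_of_refl_on fun x _ => Cong.refl x
  | nest M N P =>
      simp only [leaves_coll, List.append_assoc]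
      exact Multiset.rel_refl_of_refl_on fun x _ => Cong.refl x

end GammaNF
namespace GammaNF
open PTerm

/-- The γ-normal form. -/
def nf : PTerm → PTerm
  | .var x => .var x
  | .lam x M => .lam x (nf M)
  | .coll M N => .coll (nf M) (nf N)
  | .app M N => mkC (pairsL (leaves (nf M)) (leaves (nf N)))

@[simp] lemma nf_var (x : ℕ) : nf (.var x) = .var x := rfl
@[simp] lemma nf_lam (x : ℕ) (M : PTerm) : nf (.lam x M) = .lam x (nf M) := rfl
@[simp] lemma nf_coll (M N : PTerm) : nf (.coll M N) = .coll (nf M) (nf N) := rfl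
@[simp] lemma nf_app (M N : PTerm) :
    nf (.app M N) = mkC (pairsL (leaves (nf M)) (leaves (nf N))) := rfl

lemma leaves_collOf : ∀ (l : List PTerm) (a : PTerm),
    leaves (collOf a l) = leaves a ++ l.flatMap leaves
  | [], a => by simp [collOf]
  | b :: l', a => by
      show leaves (.coll a (collOf b l')) = _
      rw [leaves_coll, leaves_collOf l' b]
      simp

lemma leaves_mkC {l : List PTerm} (h : l ≠ []) :
    leaves (mkC l) = l.flatMap leaves := by
  rcases List.exists_cons_of_ne_nil h with ⟨a, l', rfl⟩
  show leaves (collOf a l') = _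
  rw [leaves_collOf]
  simp

lemma flatMap_leaves_eq {l : List PTerm} (h : ∀ c ∈ l, ¬ IsColl c) :
    l.flatMap leaves = l := by
  induction l with
  | nil => simp
  | cons a l' ih =>
      rw [List.flatMap_cons, leaves_eq_single_of_not_isColl (h a (by simp)),
        ih fun c hc => h c (by simp [hc])]
      simp

lemma leaves_nf_app (M N : PTerm) :
    leaves (nf (.app M N)) = pairsL (leaves (nf M)) (leaves (nf N)) := by
  rw [nf_app, leaves_mkC (pairsL_ne_nil (leaves_ne_nil _) (leaves_ne_nil _))]
  apply flatMap_leaves_eq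
  intro c hc
  rcases mem_pairsL hc with ⟨a, _, b, _, rfl⟩
  simp [IsColl]

lemma nf_collOf : ∀ (l : List PTerm) (a : PTerm),
    nf (collOf a l) = collOf (nf a) (l.map nf)
  | [], a => by simp [collOf]
  | b :: l', a => by
      show nf (.coll a (collOf b l')) = _
      rw [nf_coll, nf_collOf l' b]
      simp [collOf]

lemma leaves_nf_mkC {l : List PTerm} (h : l ≠ []) :
    leaves (nf (mkC l)) = l.flatMap fun c => leaves (nf c) := by
  rcases List.exists_cons_of_ne_nil h with ⟨a, l', rfl⟩
  show leaves (nf (collOf a l')) = _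
  rw [nf_collOf, leaves_collOf]
  simp [List.flatMap_map, Function.comp]

lemma coe_pairsL (A B : List PTerm) :
    ((pairsL A B : List PTerm) : Multiset PTerm)
      = (↑A : Multiset PTerm).bind fun a => (↑B : Multiset PTerm).map (.app a) := by
  rw [pairsL, ← Multiset.coe_bind]
  apply Multiset.bind_congr (fun a _ => ?_)
  simp

lemma rel_pairsL {A A' B B' : List PTerm}
    (hA : Multiset.Rel Cong (↑A) (↑A')) (hB : Multiset.Rel Cong (↑B) (↑B')) :
    Multiset.Rel Cong (↑(pairsL A B)) (↑(pairsL A' B')) := by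
  rw [coe_pairsL, coe_pairsL]
  refine Multiset.rel_bind (fun {a a'} haa' => ?_) hA
  exact Multiset.rel_map.2 (hB.mono fun b _ b' _ hbb' => Cong.app haa' hbb')

lemma cong_nf_app {M M' N N' : PTerm}
    (h1 : Cong (nf M) (nf M')) (h2 : Cong (nf N) (nf N')) :
    Cong (nf (.app M N)) (nf (.app M' N')) := by
  rw [nf_app, nf_app]
  exact cong_mkC_of_rel (rel_pairsL (leaves_rel h1) (leaves_rel h2))

lemma cong_nf : ∀ {M N : PTerm}, Cong M N → Cong (nf M) (nf N) := by
  intro M N h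
  induction h with
  | refl M => exact Cong.refl _
  | symm _ ih => exact ih.symm
  | trans _ _ ih1 ih2 => exact ih1.trans ih2
  | app _ _ ih1 ih2 => exact cong_nf_app ih1 ih2
  | lam x _ ih => exact Cong.lam x ih
  | coll _ _ ih1 ih2 => exact Cong.coll ih1 ih2
  | ord M N => exact Cong.ord _ _
  | nest M N P => exact Cong.nest _ _ _

end GammaNF
namespace GammaNF
open PTerm

lemma coe_flatMap (l : List PTerm) (f : PTerm → List PTerm) :
    ((l.flatMap f : List PTerm) : Multiset PTerm)
      = (↑l : Multiset PTerm).bind fun a => (↑(f a) : Multiset PTerm) := by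
  rw [← Multiset.coe_bind]

lemma pairs_flat_eq (Ms Ns : List PTerm) (f g : PTerm → List PTerm) :
    (↑(pairsL (Ms.flatMap f) (Ns.flatMap g)) : Multiset PTerm)
    = (↑Ms : Multiset PTerm).bind fun a => (↑Ns : Multiset PTerm).bind fun b =>
        (↑(pairsL (f a) (g b)) : Multiset PTerm) := by
  rw [coe_pairsL, coe_flatMap, coe_flatMap, Multiset.bind_assoc]
  apply Multiset.bind_congr (fun a _ => ?_)
  simp only [Multiset.map_bind]
  rw [Multiset.bind_bind]
  apply Multiset.bind_congr (fun b _ => ?_)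
  rw [coe_pairsL]

lemma rhs_flat_eq (Ms Ns : List PTerm) :
    (↑((pairsL Ms Ns).flatMap fun c => leaves (nf c)) : Multiset PTerm)
    = (↑Ms : Multiset PTerm).bind fun a => (↑Ns : Multiset PTerm).bind fun b =>
        (↑(pairsL (leaves (nf a)) (leaves (nf b))) : Multiset PTerm) := by
  rw [coe_flatMap, coe_pairsL, Multiset.bind_assoc]
  apply Multiset.bind_congr (fun a _ => ?_)
  rw [Multiset.bind_map]
  apply Multiset.bind_congr (fun b _ => ?_)
  rw [leaves_nf_app]

lemma gamma_rhs_eq (M N : PTerm) (Ms Ns : List PTerm) :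
    collOf (.app M N)
        (Ns.map (.app M) ++ Ms.flatMap fun Mi => (N :: Ns).map (.app Mi))
      = mkC (pairsL (M :: Ms) (N :: Ns)) := by
  simp [pairsL, mkC, List.flatMap_cons]

lemma cong_nf_gamma {P Q : PTerm} (h : Gamma P Q) : Cong (nf P) (nf Q) := by
  rcases h with ⟨P, Q, M, N, Ms, Ns, hP, hQ, hn⟩
  rw [gamma_rhs_eq]
  apply cong_of_rel_leaves
  have hMs' : (M :: Ms : List PTerm) ≠ [] := by simp
  have hNs' : (N :: Ns : List PTerm) ≠ [] := by simp
  have hPn : pairsL (M :: Ms) (N :: Ns) ≠ [] := pairsL_ne_nil hMs' hNs'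
  rw [leaves_nf_app, leaves_nf_mkC hPn]
  have hA : Multiset.Rel Cong (↑(leaves (nf P)))
      (↑(leaves (nf (mkC (M :: Ms))))) := leaves_rel (cong_nf hP)
  have hB : Multiset.Rel Cong (↑(leaves (nf Q)))
      (↑(leaves (nf (mkC (N :: Ns))))) := leaves_rel (cong_nf hQ)
  rw [leaves_nf_mkC hMs'] at hA
  rw [leaves_nf_mkC hNs'] at hB
  have h1 := rel_pairsL hA hB
  rwa [pairs_flat_eq, ← rhs_flat_eq] at h1

lemma cong_nf_step : ∀ {M N : PTerm}, StepG M N → Cong (nf M) (nf N) := by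
  intro M N h
  induction h with
  | gamma hg => exact cong_nf_gamma hg
  | appL _ ih => exact cong_nf_app ih (Cong.refl _)
  | appR _ ih => exact cong_nf_app (Cong.refl _) ih
  | lam x _ ih => exact Cong.lam x ih
  | collL _ ih => exact Cong.coll ih (Cong.refl _)
  | collR _ ih => exact Cong.coll (Cong.refl _) ih

lemma cong_nf_red : ∀ {M N : PTerm}, RedG M N → Cong (nf M) (nf N) := by
  intro M N h
  induction h with
  | refl => exact Cong.refl _
  | tail _ hstep ih => exact ih.trans (hstep.elim cong_nf_step cong_nf)

end GammaNF
namespace GammaNF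
open PTerm

lemma noG_collOf : ∀ (l : List PTerm) (a : PTerm), NoGammaRedex a →
    (∀ b ∈ l, NoGammaRedex b) → NoGammaRedex (collOf a l)
  | [], a, ha, _ => ha
  | b :: l', a, ha, hl => by
      show NoGammaRedex (.coll a (collOf b l'))
      exact ⟨ha, noG_collOf l' b (hl b (by simp)) fun c hc => hl c (by simp [hc])⟩

lemma noG_mkC : ∀ {l : List PTerm}, (∀ b ∈ l, NoGammaRedex b) → NoGammaRedex (mkC l)
  | [], _ => trivial
  | a :: l', h => noG_collOf l' a (h a (by simp)) fun c hc => h c (by simp [hc])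

lemma noG_leaves : ∀ {M : PTerm}, NoGammaRedex M → ∀ c ∈ leaves M, NoGammaRedex c
  | .var _, h, c, hc => by simp at hc; subst hc; trivial
  | .lam _ _, h, c, hc => by simp at hc; subst hc; exact h
  | .app _ _, h, c, hc => by simp at hc; subst hc; exact h
  | .coll M N, h, c, hc => by
      rcases List.mem_append.1 hc with h' | h'
      · exact noG_leaves h.1 c h'
      · exact noG_leaves h.2 c h'

lemma noG_nf : ∀ M : PTerm, NoGammaRedex (nf M)
  | .var x => trivial
  | .lam x M => noG_nf M
  | .coll M N => ⟨noG_nf M, noG_nf N⟩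
  | .app M N => by
      rw [nf_app]
      apply noG_mkC
      intro c hc
      rcases mem_pairsL hc with ⟨a, ha, b, hb, rfl⟩
      exact ⟨not_isColl_of_mem_leaves _ a ha, not_isColl_of_mem_leaves _ b hb,
        noG_leaves (noG_nf M) a ha, noG_leaves (noG_nf N) b hb⟩

lemma cong_isColl : ∀ {M N : PTerm}, Cong M N → (IsColl M ↔ IsColl N) := by
  intro M N h
  induction h with
  | refl M => exact Iff.rfl
  | symm _ ih => exact ih.symm
  | trans _ _ ih1 ih2 => exact ih1.trans ih2
  | app _ _ _ _ => exact Iff.rfl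
  | lam _ _ _ => exact Iff.rfl
  | coll _ _ _ _ => simp [IsColl]
  | ord _ _ => simp [IsColl]
  | nest _ _ _ => simp [IsColl]

lemma cong_nf_of_noG : ∀ {M : PTerm}, NoGammaRedex M → Cong (nf M) M
  | .var x, _ => Cong.refl _
  | .lam x M, h => Cong.lam x (cong_nf_of_noG h)
  | .coll M N, h => Cong.coll (cong_nf_of_noG h.1) (cong_nf_of_noG h.2)
  | .app M N, h => by
      rcases h with ⟨hM, hN, hM', hN'⟩
      have cM : Cong (nf M) M := cong_nf_of_noG hM'
      have cN : Cong (nf N) N := cong_nf_of_noG hN'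
      have lM : leaves (nf M) = [nf M] :=
        leaves_eq_single_of_not_isColl fun hc => hM ((cong_isColl cM).1 hc)
      have lN : leaves (nf N) = [nf N] :=
        leaves_eq_single_of_not_isColl fun hc => hN ((cong_isColl cN).1 hc)
      rw [nf_app, lM, lN]
      show Cong (.app (nf M) (nf N)) (.app M N)
      exact Cong.app cM cN

/-- lifting of RedG through the term constructors -/
lemma redG_lam (x : ℕ) {M M' : PTerm} (h : RedG M M') : RedG (.lam x M) (.lam x M') :=
  Relation.ReflTransGen.lift (r := fun M N => StepG M N ∨ Cong M N) (p := fun M N => StepG M N ∨ Cong M N) (PTerm.lam x) (fun _ _ h => h.elim (fun h => Or.inl (StepG.lam x h))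
    (fun h => Or.inr (Cong.lam x h))) _ _ h

lemma redG_app {M M' N N' : PTerm} (h1 : RedG M M') (h2 : RedG N N') :
    RedG (.app M N) (.app M' N') := by
  have s1 : RedG (.app M N) (.app M' N) :=
    Relation.ReflTransGen.lift (r := fun M N => StepG M N ∨ Cong M N) (p := fun M N => StepG M N ∨ Cong M N) (fun P => PTerm.app P N)
      (fun _ _ h => h.elim (fun h => Or.inl (StepG.appL h))
        (fun h => Or.inr (Cong.app h (Cong.refl N)))) _ _ h1
  have s2 : RedG (.app M' N) (.app M' N') :=
    Relation.ReflTransGen.lift (r := fun M N => StepG M N ∨ Cong M N) (p := fun M N => StepG M N ∨ Cong M N) (fun P => PTerm.app M' P)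
      (fun _ _ h => h.elim (fun h => Or.inl (StepG.appR h))
        (fun h => Or.inr (Cong.app (Cong.refl M') h))) _ _ h2
  exact s1.trans s2

lemma redG_coll {M M' N N' : PTerm} (h1 : RedG M M') (h2 : RedG N N') :
    RedG (.coll M N) (.coll M' N') := by
  have s1 : RedG (.coll M N) (.coll M' N) :=
    Relation.ReflTransGen.lift (r := fun M N => StepG M N ∨ Cong M N) (p := fun M N => StepG M N ∨ Cong M N) (fun P => PTerm.coll P N)
      (fun _ _ h => h.elim (fun h => Or.inl (StepG.collL h))
        (fun h => Or.inr (Cong.coll h (Cong.refl N)))) _ _ h1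
  have s2 : RedG (.coll M' N) (.coll M' N') :=
    Relation.ReflTransGen.lift (r := fun M N => StepG M N ∨ Cong M N) (p := fun M N => StepG M N ∨ Cong M N) (fun P => PTerm.coll M' P)
      (fun _ _ h => h.elim (fun h => Or.inl (StepG.collR h))
        (fun h => Or.inr (Cong.coll (Cong.refl M') h))) _ _ h2
  exact s1.trans s2

lemma redG_nf : ∀ M : PTerm, RedG M (nf M)
  | .var x => Relation.ReflTransGen.refl
  | .lam x M => redG_lam x (redG_nf M)
  | .coll M N => redG_coll (redG_nf M) (redG_nf N)
  | .app M N => by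
      have h0 : RedG (.app M N) (.app (nf M) (nf N)) :=
        redG_app (redG_nf M) (redG_nf N)
      rcases List.exists_cons_of_ne_nil (leaves_ne_nil (nf M)) with ⟨a, As, hA⟩
      rcases List.exists_cons_of_ne_nil (leaves_ne_nil (nf N)) with ⟨b, Bs, hB⟩
      by_cases hs : As = [] ∧ Bs = []
      · rcases hs with ⟨rfl, rfl⟩
        have hM : nf M = a := eq_of_leaves_eq_single hA
        have hN : nf N = b := eq_of_leaves_eq_single hB
        have : nf (.app M N) = .app (nf M) (nf N) := by
          rw [nf_app, hA, hB, ← hM, ← hN]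
          rfl
        rw [this]; exact h0
      · have hn : As ≠ [] ∨ Bs ≠ [] := by
          by_contra hc
          push_neg at hc
          exact hs ⟨hc.1, hc.2⟩
        have hP : Cong (nf M) (collOf a As) := by
          have := cong_mkC_leaves (nf M); rwa [hA] at this
        have hQ : Cong (nf N) (collOf b Bs) := by
          have := cong_mkC_leaves (nf N); rwa [hB] at this
        have hstep : StepG (.app (nf M) (nf N))
            (collOf (.app a b)
              (Bs.map (.app a) ++ As.flatMap fun Mi => (b :: Bs).map (.app Mi))) :=
          StepG.gamma (Gamma.mk (nf M) (nf N) a b As Bs hP hQ hn)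
        rw [gamma_rhs_eq] at hstep
        have : nf (.app M N) = mkC (pairsL (a :: As) (b :: Bs)) := by
          rw [nf_app, hA, hB]
        rw [this]
        exact h0.tail (Or.inl hstep)

end GammaNF

/-- Uniqueness of γ-normal forms: if M ↠_γ N₁ and M ↠_γ N₂ with N₁, N₂ both
in γ-normal form, then N₁ ≡ N₂ up to the congruence generated by (ClnOrd) and
(ClnNest); hence every λ^p-term M has a unique γ-normal form γ(M). -/
theorem gamma_normal_form_unique :
    (∀ M N₁ N₂ : PTerm, RedG M N₁ → RedG M N₂ →
      NoGammaRedex N₁ → NoGammaRedex N₂ → Cong N₁ N₂) ∧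
    (∀ M : PTerm, ∃ N : PTerm, RedG M N ∧ NoGammaRedex N ∧
      ∀ N' : PTerm, RedG M N' → NoGammaRedex N' → Cong N' N) := by
  have part1 : ∀ M N₁ N₂ : PTerm, RedG M N₁ → RedG M N₂ →
      NoGammaRedex N₁ → NoGammaRedex N₂ → Cong N₁ N₂ := by
    intro M N₁ N₂ h1 h2 g1 g2
    exact ((GammaNF.cong_nf_of_noG g1).symm.trans (GammaNF.cong_nf_red h1).symm).trans
      ((GammaNF.cong_nf_red h2).trans (GammaNF.cong_nf_of_noG g2))
  refine ⟨part1, fun M => ⟨GammaNF.nf M, GammaNF.redG_nf M, GammaNF.noG_nf M, ?_⟩⟩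
  intro N' h g
  exact part1 M N' (GammaNF.nf M) h (GammaNF.redG_nf M) g (GammaNF.noG_nf M)
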